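/- Let n ≥ 3 and k ≥ 1 with 2k ≤ n, let μ ∈ ℝ, and let R = (μ/2)·g² be the algebraic curvature tensor of constant sectional curvature μ. Then the 2k-Ricci tensor ℛ^{(2k)} = c_g^{2k−1}(R^k) satisfies ℛ^{(2k)} = λ_k·g, where λ_k = (n−1)(n−2)·C_{n,k}·μ^k and C_{n,k} = (2k)!·(n−3)!/(2^k·(n−2k)!). Equivalently, c_g^{2k−1}(g^{2k}) = ((2k)!·(n−1)!/(n−2k)!)·g. -/

import Mathlib

/-- Double forms on the inner product space `ℝⁿ` (with its standard inner product `g`),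
described by their components with respect to the standard orthonormal basis: the component
at bidegree `(p, q)` is a real-valued function of `p` "row" indices and `q` "column" indices
(an element of `Λᵖ(ℝⁿ)* ⊗ Λ^q(ℝⁿ)*` is exactly such a component function which is
antisymmetric in each group of indices). -/
abbrev DoubleForm (n : ℕ) : Type :=
  ∀ p q : ℕ, (Fin p → Fin n) → (Fin q → Fin n) → ℝ

/-- `ω` is a double form of bidegree `(p, q)`: it is concentrated at `(p, q)` and is
antisymmetric in each group of arguments. -/
def dfHasBidegree (n p q : ℕ) (ω : DoubleForm n) : Prop :=
  (∀ p' q', ¬(p' = p ∧ q' = q) → ω p' q' = 0) ∧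
  (∀ (σ : Equiv.Perm (Fin p)) (x : Fin p → Fin n) (y : Fin q → Fin n),
      ω p q (x ∘ σ) y = ((Equiv.Perm.sign σ : ℤ) : ℝ) * ω p q x y) ∧
  (∀ (τ : Equiv.Perm (Fin q)) (x : Fin p → Fin n) (y : Fin q → Fin n),
      ω p q x (y ∘ τ) = ((Equiv.Perm.sign τ : ℤ) : ℝ) * ω p q x y)

/-- The unit double form (the constant `1` in bidegree `(0,0)`). -/
noncomputable def dfOne (n : ℕ) : DoubleForm n
  | 0, 0, _, _ => 1
  | _, _, _, _ => 0

/-- The metric `g` (the standard inner product) as a `(1,1)` double form. -/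
noncomputable def dfG (n : ℕ) : DoubleForm n
  | 1, 1, x, y => if x 0 = y 0 then 1 else 0
  | _, _, _, _ => 0

/-- The product of double forms: the wedge product (determinant convention) on each of the
two tensor factors, with no extra sign (so that `(θ₁⊗θ₂)·(θ₃⊗θ₄) = (θ₁∧θ₃)⊗(θ₂∧θ₄)`). -/
noncomputable def dfMul (n : ℕ) (ω θ : DoubleForm n) : DoubleForm n :=
  fun p q x y =>
    ∑ p₁ : Fin (p + 1), ∑ q₁ : Fin (q + 1),
      (((p₁ : ℕ).factorial * (p - (p₁ : ℕ)).factorial *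
          (q₁ : ℕ).factorial * (q - (q₁ : ℕ)).factorial : ℕ) : ℝ)⁻¹ *
        ∑ σ : Equiv.Perm (Fin p), ∑ τ : Equiv.Perm (Fin q),
          ((Equiv.Perm.sign σ : ℤ) : ℝ) * ((Equiv.Perm.sign τ : ℤ) : ℝ) *
            (ω (p₁ : ℕ) (q₁ : ℕ)
               (fun i => x (σ (Fin.castLE (Nat.lt_succ_iff.mp p₁.isLt) i)))
               (fun j => y (τ (Fin.castLE (Nat.lt_succ_iff.mp q₁.isLt) j))) *
             θ (p - (p₁ : ℕ)) (q - (q₁ : ℕ))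
               (fun i => x (σ ⟨(p₁ : ℕ) + (i : ℕ), by
                  have h1 := i.isLt; have h2 := p₁.isLt; omega⟩))
               (fun j => y (τ ⟨(q₁ : ℕ) + (j : ℕ), by
                  have h1 := j.isLt; have h2 := q₁.isLt; omega⟩)))

/-- Powers of a double form with respect to the product `dfMul`. -/
noncomputable def dfPow (n : ℕ) (ω : DoubleForm n) : ℕ → DoubleForm n
  | 0 => dfOne n
  | m + 1 => dfMul n (dfPow n ω m) ω

/-- The contraction `c_g` with respect to the standard inner product: it maps the
`(p+1, q+1)` component to the `(p, q)` component by tracing over a pair of slots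
(and is zero on bidegrees `(p, 0)` and `(0, q)`). -/
noncomputable def dfContr (n : ℕ) (ω : DoubleForm n) : DoubleForm n :=
  fun p q x y => ∑ i : Fin n, ω (p + 1) (q + 1) (Fin.cons i x) (Fin.cons i y)

/-- The natural inner product, at bidegree `(p, q)`, induced by `g` on double forms
(for which the monomials with strictly increasing indices are orthonormal). -/
noncomputable def dfInner (n p q : ℕ) (ω θ : DoubleForm n) : ℝ :=
  ((p.factorial * q.factorial : ℕ) : ℝ)⁻¹ *
    ∑ x : Fin p → Fin n, ∑ y : Fin q → Fin n, ω p q x y * θ p q x y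

/-- For a bilinear form `h` on `ℝⁿ` (given by its component matrix), the operator `F_h`,
inserting the `g`-symmetric endomorphism `H` associated to `h` into each slot in turn. -/
noncomputable def dfF (n : ℕ) (h : Fin n → Fin n → ℝ) (ω : DoubleForm n) : DoubleForm n :=
  fun p q x y =>
    (∑ k : Fin p, ∑ i : Fin n, h (x k) i * ω p q (Function.update x k i) y) +
    (∑ k : Fin q, ∑ i : Fin n, h (y k) i * ω p q x (Function.update y k i))

/-- A bilinear form on `ℝⁿ` (given by its component matrix) as a `(1,1)` double form. -/
noncomputable def dfOfMatrix (n : ℕ) (h : Fin n → Fin n → ℝ) : DoubleForm n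
  | 1, 1, x, y => h (x 0) (y 0)
  | _, _, _, _ => 0

/-- The component matrix of the `(1,1)` part of a double form. -/
noncomputable def dfMat (n : ℕ) (ω : DoubleForm n) : Fin n → Fin n → ℝ :=
  fun i j => ω 1 1 (fun _ => i) (fun _ => j)

/-- `R ∈ C²`: a `(2,2)` double form satisfying the symmetry
`R(x₁∧x₂ ⊗ y₁∧y₂) = R(y₁∧y₂ ⊗ x₁∧x₂)`. -/
def dfIsC2 (n : ℕ) (R : DoubleForm n) : Prop :=
  dfHasBidegree n 2 2 R ∧ ∀ x y : Fin 2 → Fin n, R 2 2 x y = R 2 2 y x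

/-- The operator `𝔑_R` : `(𝔑_R h)(v, w) = Σᵢ h(R(v, eᵢ)w, eᵢ)`, where the `(3,1)`-tensor of
`R` is determined by `g(R(x,y)z, u) = R(x∧y ⊗ z∧u)`. -/
noncomputable def curvAction (n : ℕ) (R : DoubleForm n) (h : Fin n → Fin n → ℝ) :
    Fin n → Fin n → ℝ :=
  fun v w => ∑ i : Fin n, ∑ u : Fin n, R 2 2 ![v, i] ![w, u] * h u i

/-- The contraction associated to an arbitrary metric on `ℝⁿ` whose Gram matrix in the
standard basis is `G`: `c_{g'} ω = Σᵢⱼ (G⁻¹)ᵢⱼ ω(vᵢ∧… ⊗ vⱼ∧…)`. -/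
noncomputable def dfContrM (n : ℕ) (G : Matrix (Fin n) (Fin n) ℝ) (ω : DoubleForm n) :
    DoubleForm n :=
  fun p q x y => ∑ i : Fin n, ∑ j : Fin n,
    (G⁻¹) i j * ω (p + 1) (q + 1) (Fin.cons i x) (Fin.cons j y)

open Equiv Finset

noncomputable def sgn {m : ℕ} (σ : Equiv.Perm (Fin m)) : ℝ := ((Equiv.Perm.sign σ : ℤ) : ℝ)

lemma sgn_mul {m : ℕ} (σ τ : Equiv.Perm (Fin m)) : sgn (σ * τ) = sgn σ * sgn τ := by
  simp [sgn]

lemma sgn_sq {m : ℕ} (σ : Equiv.Perm (Fin m)) : sgn σ * sgn σ = 1 := by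
  rcases Int.units_eq_one_or (Equiv.Perm.sign σ) with h | h <;> simp [sgn, h]

lemma sgn_inv {m : ℕ} (σ : Equiv.Perm (Fin m)) : sgn σ⁻¹ = sgn σ := by
  simp [sgn]

noncomputable def gme (n m : ℕ) (x y : Fin m → Fin n) : ℝ :=
  ∑ κ : Equiv.Perm (Fin m), sgn κ *
    ∏ i, (if x (κ i) = y i then (1:ℝ) else 0)

noncomputable def gmdf (n m : ℕ) : DoubleForm n := fun p q x y =>
  if h : p = m ∧ q = m then
    (m.factorial : ℝ) * gme n m (x ∘ Fin.cast h.1.symm) (y ∘ Fin.cast h.2.symm)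
  else 0

lemma gmdf_apply (n m : ℕ) (x y : Fin m → Fin n) :
    gmdf n m m m x y = (m.factorial : ℝ) * gme n m x y := by
  rw [gmdf, dif_pos ⟨rfl, rfl⟩]
  rfl

lemma gmdf_eq_zero (n m p q : ℕ) (h : ¬(p = m ∧ q = m)) (x : Fin p → Fin n)
    (y : Fin q → Fin n) : gmdf n m p q x y = 0 := dif_neg h

lemma gmdf_eval (n m p q : ℕ) (hp : p = m) (hq : q = m) (X : Fin p → Fin n)
    (Y : Fin q → Fin n) :
    gmdf n m p q X Y = (m.factorial : ℝ) *
      gme n m (fun i => X (Fin.cast hp.symm i)) (fun j => Y (Fin.cast hq.symm j)) := by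
  subst hp; subst hq
  rw [gmdf_apply]
  rfl

lemma gme_zero (n : ℕ) (x y : Fin 0 → Fin n) : gme n 0 x y = 1 := by
  simp [gme, sgn]

lemma gme_one (n : ℕ) (x y : Fin 1 → Fin n) :
    gme n 1 x y = if x 0 = y 0 then 1 else 0 := by
  simp [gme, sgn]

lemma T_eq (n m : ℕ) (x y : Fin m → Fin n) :
    ∑ σ : Equiv.Perm (Fin m), ∑ τ : Equiv.Perm (Fin m),
      sgn σ * sgn τ * ∏ v, (if x (σ v) = y (τ v) then (1:ℝ) else 0)
    = (m.factorial : ℝ) * gme n m x y := by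
  rw [Finset.sum_comm]
  have h1 : ∀ τ : Equiv.Perm (Fin m),
      ∑ σ : Equiv.Perm (Fin m), sgn σ * sgn τ * ∏ v, (if x (σ v) = y (τ v) then (1:ℝ) else 0)
      = gme n m x y := by
    intro τ
    rw [← Equiv.sum_comp (Equiv.mulRight τ)
      (fun σ => sgn σ * sgn τ * ∏ v, (if x (σ v) = y (τ v) then (1:ℝ) else 0))]
    unfold gme
    refine Finset.sum_congr rfl fun κ _ => ?_
    have hp : ∏ v, (if x ((Equiv.mulRight τ κ) v) = y (τ v) then (1:ℝ) else 0)
        = ∏ v, (if x (κ v) = y v then (1:ℝ) else 0) := by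
      rw [← Equiv.prod_comp τ (fun v => if x (κ v) = y v then (1:ℝ) else 0)]
      refine Finset.prod_congr rfl fun v _ => ?_
      rfl
    have : sgn (Equiv.mulRight τ κ) = sgn κ * sgn τ := by
      simp [Equiv.mulRight, sgn_mul]
    rw [hp, this]
    have h2 := sgn_sq τ
    generalize (∏ v, (if x (κ v) = y v then (1:ℝ) else 0)) = P
    linear_combination (sgn κ * P) * h2
  calc ∑ τ : Equiv.Perm (Fin m), ∑ σ : Equiv.Perm (Fin m),
        sgn σ * sgn τ * ∏ v, (if x (σ v) = y (τ v) then (1:ℝ) else 0)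
      = ∑ _τ : Equiv.Perm (Fin m), gme n m x y := Finset.sum_congr rfl fun τ _ => h1 τ
    _ = (m.factorial : ℝ) * gme n m x y := by
        simp [Finset.sum_const, Finset.card_univ, Fintype.card_perm]

lemma sum_swap4 {α β γ δ : Type*} [Fintype α] [Fintype β] [Fintype γ] [Fintype δ]
    (f : α → β → γ → δ → ℝ) :
    ∑ a, ∑ b, ∑ c, ∑ d, f a b c d = ∑ c, ∑ d, ∑ a, ∑ b, f a b c d :=
  calc ∑ a, ∑ b, ∑ c, ∑ d, f a b c d
      = ∑ a, ∑ c, ∑ b, ∑ d, f a b c d :=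
        Finset.sum_congr rfl fun _ _ => Finset.sum_comm
    _ = ∑ c, ∑ a, ∑ b, ∑ d, f a b c d := Finset.sum_comm
    _ = ∑ c, ∑ a, ∑ d, ∑ b, f a b c d :=
        Finset.sum_congr rfl fun _ _ => Finset.sum_congr rfl fun _ _ => Finset.sum_comm
    _ = ∑ c, ∑ d, ∑ a, ∑ b, f a b c d := Finset.sum_congr rfl fun _ _ => Finset.sum_comm

lemma key_sum (n a b : ℕ) (x y : Fin (a + b) → Fin n) :
    ∑ σ : Equiv.Perm (Fin (a + b)), ∑ τ : Equiv.Perm (Fin (a + b)),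
      sgn σ * sgn τ *
        (gme n a (fun i => x (σ (Fin.castAdd b i))) (fun i => y (τ (Fin.castAdd b i))) *
         gme n b (fun i => x (σ (Fin.natAdd a i))) (fun i => y (τ (Fin.natAdd a i))))
    = (a.factorial : ℝ) * b.factorial * ((a + b).factorial * gme n (a + b) x y) := by
  have step1 : ∑ σ : Equiv.Perm (Fin (a + b)), ∑ τ : Equiv.Perm (Fin (a + b)),
      sgn σ * sgn τ *
        (gme n a (fun i => x (σ (Fin.castAdd b i))) (fun i => y (τ (Fin.castAdd b i))) *
         gme n b (fun i => x (σ (Fin.natAdd a i))) (fun i => y (τ (Fin.natAdd a i))))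
      = ∑ σ : Equiv.Perm (Fin (a + b)), ∑ τ : Equiv.Perm (Fin (a + b)),
          ∑ ρ : Equiv.Perm (Fin a), ∑ π : Equiv.Perm (Fin b),
          sgn σ * sgn τ * (sgn ρ * sgn π) *
            ((∏ i : Fin a, if x (σ (Fin.castAdd b (ρ i))) = y (τ (Fin.castAdd b i)) then (1:ℝ) else 0) *
             (∏ i : Fin b, if x (σ (Fin.natAdd a (π i))) = y (τ (Fin.natAdd a i)) then (1:ℝ) else 0)) := by
    refine Finset.sum_congr rfl fun σ _ => Finset.sum_congr rfl fun τ _ => ?_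
    unfold gme
    rw [Finset.sum_mul_sum, Finset.mul_sum]
    refine Finset.sum_congr rfl fun ρ _ => ?_
    rw [Finset.mul_sum]
    refine Finset.sum_congr rfl fun π _ => ?_
    ring
  rw [step1, sum_swap4]
  have step2 : ∀ (ρ : Equiv.Perm (Fin a)) (π : Equiv.Perm (Fin b)),
      (∑ σ : Equiv.Perm (Fin (a + b)), ∑ τ : Equiv.Perm (Fin (a + b)),
        sgn σ * sgn τ * (sgn ρ * sgn π) *
          ((∏ i : Fin a, if x (σ (Fin.castAdd b (ρ i))) = y (τ (Fin.castAdd b i)) then (1:ℝ) else 0) *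
           (∏ i : Fin b, if x (σ (Fin.natAdd a (π i))) = y (τ (Fin.natAdd a i)) then (1:ℝ) else 0)))
      = ∑ σ : Equiv.Perm (Fin (a + b)), ∑ τ : Equiv.Perm (Fin (a + b)),
          sgn σ * sgn τ * ∏ v, (if x (σ v) = y (τ v) then (1:ℝ) else 0) := by
    intro ρ π
    set e : Equiv.Perm (Fin (a + b)) := finSumFinEquiv.permCongr (Equiv.sumCongr ρ π) with he
    have he1 : ∀ i, e (Fin.castAdd b i) = Fin.castAdd b (ρ i) := by
      intro i; simp [he, Equiv.permCongr_apply]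
    have he2 : ∀ i, e (Fin.natAdd a i) = Fin.natAdd a (π i) := by
      intro i; simp [he, Equiv.permCongr_apply]
    have hi1 : ∀ i, e⁻¹ (Fin.castAdd b (ρ i)) = Fin.castAdd b i := fun i => by
      rw [← he1 i]; exact e.symm_apply_apply _
    have hi2 : ∀ i, e⁻¹ (Fin.natAdd a (π i)) = Fin.natAdd a i := fun i => by
      rw [← he2 i]; exact e.symm_apply_apply _
    have hsgne : sgn e = sgn ρ * sgn π := by
      unfold sgn
      rw [he, Equiv.Perm.sign_permCongr, Equiv.Perm.sign_sumCongr]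
      push_cast
      rfl
    rw [← Equiv.sum_comp (Equiv.mulRight e⁻¹)]
    refine Finset.sum_congr rfl fun σ _ => Finset.sum_congr rfl fun τ _ => ?_
    have hP1 : (∏ i : Fin a,
        if x ((Equiv.mulRight e⁻¹ σ) (Fin.castAdd b (ρ i))) = y (τ (Fin.castAdd b i)) then (1:ℝ) else 0)
        = ∏ i : Fin a, (if x (σ (Fin.castAdd b i)) = y (τ (Fin.castAdd b i)) then (1:ℝ) else 0) := by
      refine Finset.prod_congr rfl fun i _ => ?_
      rw [show (Equiv.mulRight e⁻¹ σ) (Fin.castAdd b (ρ i)) = σ (e⁻¹ (Fin.castAdd b (ρ i))) from rfl,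
        hi1]
    have hP2 : (∏ i : Fin b,
        if x ((Equiv.mulRight e⁻¹ σ) (Fin.natAdd a (π i))) = y (τ (Fin.natAdd a i)) then (1:ℝ) else 0)
        = ∏ i : Fin b, (if x (σ (Fin.natAdd a i)) = y (τ (Fin.natAdd a i)) then (1:ℝ) else 0) := by
      refine Finset.prod_congr rfl fun i _ => ?_
      rw [show (Equiv.mulRight e⁻¹ σ) (Fin.natAdd a (π i)) = σ (e⁻¹ (Fin.natAdd a (π i))) from rfl,
        hi2]
    rw [hP1, hP2]
    have hsplit : (∏ v, (if x (σ v) = y (τ v) then (1:ℝ) else 0))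
        = (∏ i : Fin a, (if x (σ (Fin.castAdd b i)) = y (τ (Fin.castAdd b i)) then (1:ℝ) else 0)) *
          ∏ i : Fin b, (if x (σ (Fin.natAdd a i)) = y (τ (Fin.natAdd a i)) then (1:ℝ) else 0) :=
      Fin.prod_univ_add _
    rw [hsplit]
    have hs : sgn (Equiv.mulRight e⁻¹ σ) = sgn σ * sgn e := by
      rw [show Equiv.mulRight e⁻¹ σ = σ * e⁻¹ from rfl, sgn_mul, sgn_inv]
    rw [hs, hsgne]
    have h2 : (sgn ρ * sgn π) * (sgn ρ * sgn π) = 1 := by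
      have := sgn_sq ρ; have := sgn_sq π; nlinarith
    generalize (∏ i : Fin a, (if x (σ (Fin.castAdd b i)) = y (τ (Fin.castAdd b i)) then (1:ℝ) else 0)) = Pa
    generalize (∏ i : Fin b, (if x (σ (Fin.natAdd a i)) = y (τ (Fin.natAdd a i)) then (1:ℝ) else 0)) = Pb
    linear_combination (sgn σ * sgn τ * Pa * Pb) * h2
  calc ∑ ρ : Equiv.Perm (Fin a), ∑ π : Equiv.Perm (Fin b),
        ∑ σ : Equiv.Perm (Fin (a + b)), ∑ τ : Equiv.Perm (Fin (a + b)),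
        sgn σ * sgn τ * (sgn ρ * sgn π) *
          ((∏ i : Fin a, if x (σ (Fin.castAdd b (ρ i))) = y (τ (Fin.castAdd b i)) then (1:ℝ) else 0) *
           (∏ i : Fin b, if x (σ (Fin.natAdd a (π i))) = y (τ (Fin.natAdd a i)) then (1:ℝ) else 0))
      = ∑ _ρ : Equiv.Perm (Fin a), ∑ _π : Equiv.Perm (Fin b),
          ((a + b).factorial : ℝ) * gme n (a + b) x y := by
        refine Finset.sum_congr rfl fun ρ _ => Finset.sum_congr rfl fun π _ => ?_
        rw [step2 ρ π, T_eq]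
    _ = (a.factorial : ℝ) * b.factorial * ((a + b).factorial * gme n (a + b) x y) := by
        simp [Finset.sum_const, Finset.card_univ, Fintype.card_perm]
        ring

lemma dfMul_gmdf (n a b : ℕ) : dfMul n (gmdf n a) (gmdf n b) = gmdf n (a + b) := by
  funext p q x y
  by_cases hpq : p = a + b ∧ q = a + b
  · obtain ⟨rfl, rfl⟩ := hpq
    rw [gmdf_apply, dfMul]
    rw [Finset.sum_eq_single (⟨a, by omega⟩ : Fin (a + b + 1))]
    rotate_left
    · intro p₁ _ hp₁
      refine Finset.sum_eq_zero fun q₁ _ => ?_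
      rw [mul_eq_zero]; right
      refine Finset.sum_eq_zero fun σ _ => Finset.sum_eq_zero fun τ _ => ?_
      rw [gmdf_eq_zero n a _ _ (fun h => hp₁ (Fin.ext h.1))]
      ring
    · intro h; exact absurd (Finset.mem_univ _) h
    rw [Finset.sum_eq_single (⟨a, by omega⟩ : Fin (a + b + 1))]
    rotate_left
    · intro q₁ _ hq₁
      rw [mul_eq_zero]; right
      refine Finset.sum_eq_zero fun σ _ => Finset.sum_eq_zero fun τ _ => ?_
      rw [gmdf_eq_zero n a _ _ (fun h => hq₁ (Fin.ext h.2))]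
      ring
    · intro h; exact absurd (Finset.mem_univ _) h
    simp only [show ((⟨a, by omega⟩ : Fin (a + b + 1)) : ℕ) = a from rfl,
      Nat.add_sub_cancel_left]
    have hba : a + b - a = b := by omega
    have hstep : ∀ σ τ : Equiv.Perm (Fin (a + b)),
        gmdf n b (a + b - a) (a + b - a)
            (fun i => x (σ ⟨a + (i : ℕ), by have := i.isLt; omega⟩))
            (fun j => y (τ ⟨a + (j : ℕ), by have := j.isLt; omega⟩))
          = (b.factorial : ℝ) *
            gme n b (fun i => x (σ (Fin.natAdd a i))) (fun j => y (τ (Fin.natAdd a j))) := by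
      intro σ τ
      rw [gmdf_eval n b _ _ hba hba]
      rfl
    have hterm : ∀ σ τ : Equiv.Perm (Fin (a + b)),
        sgn σ * sgn τ *
          (gmdf n a a a (fun i => x (σ (Fin.castLE (by omega : a ≤ a + b) i)))
              (fun j => y (τ (Fin.castLE (by omega : a ≤ a + b) j))) *
            gmdf n b (a + b - a) (a + b - a)
              (fun i => x (σ ⟨a + (i : ℕ), by have := i.isLt; omega⟩))
              (fun j => y (τ ⟨a + (j : ℕ), by have := j.isLt; omega⟩)))
        = ((a.factorial : ℝ) * b.factorial) *
            (sgn σ * sgn τ *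
              (gme n a (fun i => x (σ (Fin.castAdd b i))) (fun j => y (τ (Fin.castAdd b j))) *
               gme n b (fun i => x (σ (Fin.natAdd a i))) (fun j => y (τ (Fin.natAdd a j))))) := by
      intro σ τ
      rw [hstep σ τ]
      rw [show gmdf n a a a (fun i => x (σ (Fin.castLE (by omega : a ≤ a + b) i)))
            (fun j => y (τ (Fin.castLE (by omega : a ≤ a + b) j)))
          = (a.factorial : ℝ) *
            gme n a (fun i => x (σ (Fin.castAdd b i))) (fun j => y (τ (Fin.castAdd b j)))
        from gmdf_apply n a _ _]
      ring
    calc (((a.factorial * b.factorial * a.factorial * b.factorial : ℕ) : ℝ))⁻¹ *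
          ∑ σ : Equiv.Perm (Fin (a + b)), ∑ τ : Equiv.Perm (Fin (a + b)),
            sgn σ * sgn τ *
              (gmdf n a a a (fun i => x (σ (Fin.castLE (by omega : a ≤ a + b) i)))
                  (fun j => y (τ (Fin.castLE (by omega : a ≤ a + b) j))) *
                gmdf n b (a + b - a) (a + b - a)
                  (fun i => x (σ ⟨a + (i : ℕ), by have := i.isLt; omega⟩))
                  (fun j => y (τ ⟨a + (j : ℕ), by have := j.isLt; omega⟩)))
        = (((a.factorial * b.factorial * a.factorial * b.factorial : ℕ) : ℝ))⁻¹ *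
          ∑ σ : Equiv.Perm (Fin (a + b)), ∑ τ : Equiv.Perm (Fin (a + b)),
            ((a.factorial : ℝ) * b.factorial) *
              (sgn σ * sgn τ *
                (gme n a (fun i => x (σ (Fin.castAdd b i))) (fun j => y (τ (Fin.castAdd b j))) *
                 gme n b (fun i => x (σ (Fin.natAdd a i))) (fun j => y (τ (Fin.natAdd a j))))) := by
          congr 1
          exact Finset.sum_congr rfl fun σ _ => Finset.sum_congr rfl fun τ _ => hterm σ τ
      _ = ((a + b).factorial : ℝ) * gme n (a + b) x y := by
          rw [show (∑ σ : Equiv.Perm (Fin (a + b)), ∑ τ : Equiv.Perm (Fin (a + b)),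
              ((a.factorial : ℝ) * b.factorial) *
                (sgn σ * sgn τ *
                  (gme n a (fun i => x (σ (Fin.castAdd b i))) (fun j => y (τ (Fin.castAdd b j))) *
                   gme n b (fun i => x (σ (Fin.natAdd a i))) (fun j => y (τ (Fin.natAdd a j))))))
              = ((a.factorial : ℝ) * b.factorial) *
                ∑ σ : Equiv.Perm (Fin (a + b)), ∑ τ : Equiv.Perm (Fin (a + b)),
                  sgn σ * sgn τ *
                    (gme n a (fun i => x (σ (Fin.castAdd b i))) (fun j => y (τ (Fin.castAdd b j))) *
                     gme n b (fun i => x (σ (Fin.natAdd a i))) (fun j => y (τ (Fin.natAdd a j))))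
            from by rw [Finset.mul_sum]; exact Finset.sum_congr rfl fun σ _ => (Finset.mul_sum _ _ _).symm]
          rw [key_sum n a b x y]
          have h1 : (a.factorial : ℝ) ≠ 0 := Nat.cast_ne_zero.mpr a.factorial_ne_zero
          have h2 : (b.factorial : ℝ) ≠ 0 := Nat.cast_ne_zero.mpr b.factorial_ne_zero
          push_cast
          field_simp
  · rw [gmdf_eq_zero n (a + b) _ _ hpq, dfMul]
    refine Finset.sum_eq_zero fun p₁ _ => Finset.sum_eq_zero fun q₁ _ => ?_
    rw [mul_eq_zero]; right
    refine Finset.sum_eq_zero fun σ _ => Finset.sum_eq_zero fun τ _ => ?_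
    by_cases h1 : (p₁ : ℕ) = a ∧ (q₁ : ℕ) = a
    · rw [gmdf_eq_zero n b _ _ (fun h2 => by
        refine hpq ⟨?_, ?_⟩ <;> omega)]
      ring
    · rw [gmdf_eq_zero n a _ _ h1]
      ring

lemma sum_gme_cons (n m : ℕ) (x y : Fin m → Fin n) :
    ∑ i : Fin n, gme n (m + 1) (Fin.cons i x) (Fin.cons i y)
      = ((n : ℝ) - m) * gme n m x y := by
  unfold gme
  have expand : ∀ i : Fin n,
      (∑ κ : Equiv.Perm (Fin (m + 1)), sgn κ *
        ∏ j, (if (Fin.cons i x : Fin (m+1) → Fin n) (κ j) = (Fin.cons i y : Fin (m+1) → Fin n) j then (1:ℝ) else 0))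
      = ∑ t : Fin (m + 1), ∑ κ : Equiv.Perm (Fin m),
          sgn (Equiv.Perm.decomposeFin.symm (t, κ)) *
            ((if (Fin.cons i x : Fin (m+1) → Fin n) t = i then (1:ℝ) else 0) *
              ∏ j : Fin m, (if (Fin.cons i x : Fin (m+1) → Fin n) (Equiv.swap 0 t (κ j).succ) = y j then (1:ℝ) else 0)) := by
    intro i
    rw [← Equiv.sum_comp Equiv.Perm.decomposeFin.symm
      (fun κ => sgn κ * ∏ j, (if (Fin.cons i x : Fin (m+1) → Fin n) (κ j) = (Fin.cons i y : Fin (m+1) → Fin n) j then (1:ℝ) else 0)),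
      Fintype.sum_prod_type]
    refine Finset.sum_congr rfl fun t _ => Finset.sum_congr rfl fun κ _ => ?_
    congr 1
    rw [Fin.prod_univ_succ]
    congr 1
    · rw [Equiv.Perm.decomposeFin_symm_apply_zero, Fin.cons_zero]
    · refine Finset.prod_congr rfl fun j _ => ?_
      rw [Equiv.Perm.decomposeFin_symm_apply_succ, Fin.cons_succ]
  calc ∑ i : Fin n, ∑ κ : Equiv.Perm (Fin (m+1)), sgn κ *
        ∏ j, (if (Fin.cons i x : Fin (m+1) → Fin n) (κ j) = (Fin.cons i y : Fin (m+1) → Fin n) j then (1:ℝ) else 0)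
      = ∑ i : Fin n, ∑ t : Fin (m + 1), ∑ κ : Equiv.Perm (Fin m),
          sgn (Equiv.Perm.decomposeFin.symm (t, κ)) *
            ((if (Fin.cons i x : Fin (m+1) → Fin n) t = i then (1:ℝ) else 0) *
              ∏ j : Fin m, (if (Fin.cons i x : Fin (m+1) → Fin n) (Equiv.swap 0 t (κ j).succ) = y j then (1:ℝ) else 0)) :=
        Finset.sum_congr rfl fun i _ => expand i
    _ = ∑ t : Fin (m + 1), ∑ i : Fin n, ∑ κ : Equiv.Perm (Fin m),
          sgn (Equiv.Perm.decomposeFin.symm (t, κ)) *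
            ((if (Fin.cons i x : Fin (m+1) → Fin n) t = i then (1:ℝ) else 0) *
              ∏ j : Fin m, (if (Fin.cons i x : Fin (m+1) → Fin n) (Equiv.swap 0 t (κ j).succ) = y j then (1:ℝ) else 0)) :=
        Finset.sum_comm
    _ = ((n : ℝ) - m) * gme n m x y := by
        rw [Fin.sum_univ_succ]
        have hone : ∀ i : Fin n, (∑ κ : Equiv.Perm (Fin m),
            sgn (Equiv.Perm.decomposeFin.symm ((0 : Fin (m+1)), κ)) *
              ((if (Fin.cons i x : Fin (m+1) → Fin n) 0 = i then (1:ℝ) else 0) *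
                ∏ j : Fin m, (if (Fin.cons i x : Fin (m+1) → Fin n) (Equiv.swap 0 0 (κ j).succ) = y j then (1:ℝ) else 0)))
            = gme n m x y := by
          intro i
          unfold gme
          refine Finset.sum_congr rfl fun κ _ => ?_
          have hs : sgn (Equiv.Perm.decomposeFin.symm ((0 : Fin (m+1)), κ)) = sgn κ := by
            unfold sgn; rw [Equiv.Perm.decomposeFin.symm_sign, if_pos rfl, one_mul]
          rw [hs, Fin.cons_zero, if_pos rfl, one_mul]
          congr 1
        have hsucc : ∀ s : Fin m, (∑ i : Fin n, ∑ κ : Equiv.Perm (Fin m),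
            sgn (Equiv.Perm.decomposeFin.symm (Fin.succ s, κ)) *
              ((if (Fin.cons i x : Fin (m+1) → Fin n) s.succ = i then (1:ℝ) else 0) *
                ∏ j : Fin m, (if (Fin.cons i x : Fin (m+1) → Fin n) (Equiv.swap 0 s.succ (κ j).succ) = y j then (1:ℝ) else 0)))
            = -(gme n m x y) := by
          intro s
          rw [Finset.sum_eq_single (x s)]
          rotate_left
          · intro i _ hi
            refine Finset.sum_eq_zero fun κ _ => ?_
            rw [Fin.cons_succ, if_neg (fun h => hi h.symm)]
            ring
          · intro h; exact absurd (Finset.mem_univ _) h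
          unfold gme
          rw [← Finset.sum_neg_distrib]
          refine Finset.sum_congr rfl fun κ _ => ?_
          have hs : sgn (Equiv.Perm.decomposeFin.symm (Fin.succ s, κ)) = -sgn κ := by
            unfold sgn
            rw [Equiv.Perm.decomposeFin.symm_sign, if_neg (Fin.succ_ne_zero s)]
            push_cast
            ring
          rw [hs, Fin.cons_succ, if_pos rfl, one_mul]
          have hp : (∏ j : Fin m, (if (Fin.cons (x s) x : Fin (m+1) → Fin n) (Equiv.swap 0 s.succ (κ j).succ) = y j then (1:ℝ) else 0))
              = ∏ j : Fin m, (if x (κ j) = y j then (1:ℝ) else 0) := by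
            refine Finset.prod_congr rfl fun j _ => ?_
            by_cases hj : κ j = s
            · rw [show (Fin.cons (x s) x : Fin (m+1) → Fin n) (Equiv.swap 0 s.succ (κ j).succ) = x (κ j) from by
                rw [hj, Equiv.swap_apply_right, Fin.cons_zero]]
            · rw [show (Fin.cons (x s) x : Fin (m+1) → Fin n) (Equiv.swap 0 s.succ (κ j).succ) = x (κ j) from by
                rw [Equiv.swap_apply_of_ne_of_ne (Fin.succ_ne_zero _)
                  (fun h => hj (Fin.succ_injective _ h)), Fin.cons_succ]]
          rw [hp]
          ring
        rw [Finset.sum_congr rfl fun i (_ : i ∈ Finset.univ) => hone i,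
          Finset.sum_congr rfl fun s (_ : s ∈ Finset.univ) => hsucc s]
        simp [Finset.sum_const, Finset.card_univ]
        ring

lemma dfContr_gmdf (n m : ℕ) :
    dfContr n (gmdf n (m + 1)) = (((m : ℝ) + 1) * ((n : ℝ) - m)) • gmdf n m := by
  funext p q x y
  show (∑ i : Fin n, gmdf n (m+1) (p+1) (q+1) (Fin.cons i x) (Fin.cons i y)) = _
  by_cases h : p = m ∧ q = m
  · obtain ⟨rfl, rfl⟩ := h
    simp only [gmdf_apply, Pi.smul_apply, smul_eq_mul]
    rw [← Finset.mul_sum, sum_gme_cons]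
    push_cast [Nat.factorial_succ]
    ring
  · rw [Finset.sum_eq_zero fun i _ => gmdf_eq_zero n (m+1) _ _ (by omega) _ _]
    simp only [Pi.smul_apply, smul_eq_mul, gmdf_eq_zero n m p q h, mul_zero]

lemma dfContr_smul (n : ℕ) (c : ℝ) (ω : DoubleForm n) :
    dfContr n (c • ω) = c • dfContr n ω := by
  funext p q x y
  show (∑ i : Fin n, (c • ω) (p+1) (q+1) _ _) = _
  simp only [Pi.smul_apply, smul_eq_mul, ← Finset.mul_sum]
  rfl

lemma dfContr_iterate_smul (n : ℕ) (r : ℕ) (c : ℝ) (ω : DoubleForm n) :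
    (dfContr n)^[r] (c • ω) = c • (dfContr n)^[r] ω := by
  induction r generalizing ω with
  | zero => rfl
  | succ r ih => rw [Function.iterate_succ_apply, Function.iterate_succ_apply, dfContr_smul, ih]

lemma dfMul_smul_smul (n : ℕ) (c d : ℝ) (ω θ : DoubleForm n) :
    dfMul n (c • ω) (d • θ) = (c * d) • dfMul n ω θ := by
  funext p q x y
  simp only [dfMul, Pi.smul_apply, smul_eq_mul, Finset.mul_sum]
  refine Finset.sum_congr rfl fun p₁ _ => Finset.sum_congr rfl fun q₁ _ =>
    Finset.sum_congr rfl fun σ _ => Finset.sum_congr rfl fun τ _ => ?_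
  ring

lemma dfOne_eq (n : ℕ) : dfOne n = gmdf n 0 := by
  funext p q x y
  match p, q with
  | 0, 0 =>
    rw [show dfOne n 0 0 x y = 1 from rfl, gmdf_apply n 0 x y, gme_zero]
    norm_num
  | p + 1, q => rw [show dfOne n (p+1) q x y = 0 from rfl, gmdf_eq_zero n 0 _ _ (by omega)]
  | 0, q + 1 => rw [show dfOne n 0 (q+1) x y = 0 from rfl, gmdf_eq_zero n 0 _ _ (by omega)]

lemma dfG_eq (n : ℕ) : dfG n = gmdf n 1 := by
  funext p q x y
  match p, q with
  | 1, 1 =>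
    rw [show dfG n 1 1 x y = if x 0 = y 0 then 1 else 0 from rfl, gmdf_apply n 1 x y, gme_one]
    norm_num
  | 0, q => rw [show dfG n 0 q x y = 0 from rfl, gmdf_eq_zero n 1 _ _ (by omega)]
  | p + 2, q => rw [show dfG n (p+2) q x y = 0 from rfl, gmdf_eq_zero n 1 _ _ (by omega)]
  | 1, 0 => rw [show dfG n 1 0 x y = 0 from rfl, gmdf_eq_zero n 1 _ _ (by omega)]
  | 1, q + 2 => rw [show dfG n 1 (q+2) x y = 0 from rfl, gmdf_eq_zero n 1 _ _ (by omega)]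

lemma dfPow_gmdf (n a : ℕ) : ∀ k : ℕ, dfPow n (gmdf n a) k = gmdf n (a * k)
  | 0 => by rw [show dfPow n (gmdf n a) 0 = dfOne n from rfl, dfOne_eq, Nat.mul_zero]
  | k + 1 => by
    rw [show dfPow n (gmdf n a) (k+1) = dfMul n (dfPow n (gmdf n a) k) (gmdf n a) from rfl,
      dfPow_gmdf n a k, dfMul_gmdf, Nat.mul_succ]

lemma dfPow_smul (n : ℕ) (c : ℝ) (ω : DoubleForm n) :
    ∀ k : ℕ, dfPow n (c • ω) k = c ^ k • dfPow n ω k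
  | 0 => by rw [pow_zero, one_smul]; rfl
  | k + 1 => by
    rw [show dfPow n (c • ω) (k+1) = dfMul n (dfPow n (c • ω) k) (c • ω) from rfl,
      dfPow_smul n c ω k, dfMul_smul_smul, ← pow_succ]
    rfl

lemma dfContr_iterate_gmdf (n j : ℕ) : ∀ r : ℕ,
    (dfContr n)^[r] (gmdf n (j + r)) =
      (∏ i ∈ Finset.range r, (((j : ℝ) + i + 1) * ((n : ℝ) - (j + i)))) • gmdf n j
  | 0 => by simp
  | r + 1 => by
    have h1 : j + (r + 1) = (j + r) + 1 := rfl
    rw [Function.iterate_succ_apply, h1, dfContr_gmdf, dfContr_iterate_smul,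
      dfContr_iterate_gmdf n j r, smul_smul, Finset.prod_range_succ]
    congr 1
    push_cast
    ring

lemma prod_A : ∀ m : ℕ, (∏ i ∈ Finset.range m, ((i : ℝ) + 2)) = ((m + 1).factorial : ℝ)
  | 0 => by simp
  | m + 1 => by
    rw [Finset.prod_range_succ, prod_A m]
    push_cast [Nat.factorial_succ]
    ring

lemma prod_B (n : ℕ) : ∀ m : ℕ, m + 1 ≤ n →
    (∏ i ∈ Finset.range m, ((n : ℝ) - (1 + i))) = ((n - 1).descFactorial m : ℝ)
  | 0, _ => by simp
  | m + 1, h => by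
    rw [Finset.prod_range_succ, prod_B n m (by omega), Nat.descFactorial_succ]
    have h1 : ((n - 1 - m : ℕ) : ℝ) = (n : ℝ) - (1 + m) := by
      have e : n - 1 - m = n - (1 + m) := by omega
      rw [e, Nat.cast_sub (by omega)]
      push_cast
      ring
    push_cast
    rw [h1]
    ring

lemma P_eq (n k : ℕ) (hk : 1 ≤ k) (h2k : 2 * k ≤ n) :
    (∏ i ∈ Finset.range (2 * k - 1), (((1 : ℝ) + i + 1) * ((n : ℝ) - (1 + i))))
      = ((2 * k).factorial : ℝ) * ((n - 1).factorial : ℝ) / ((n - 2 * k).factorial : ℝ) := by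
  rw [Finset.prod_mul_distrib]
  have hA : (∏ i ∈ Finset.range (2 * k - 1), ((1 : ℝ) + i + 1))
      = ((2 * k).factorial : ℝ) := by
    calc (∏ i ∈ Finset.range (2 * k - 1), ((1 : ℝ) + i + 1))
        = ∏ i ∈ Finset.range (2 * k - 1), ((i : ℝ) + 2) :=
          Finset.prod_congr rfl fun i _ => by ring
      _ = ((2 * k - 1 + 1).factorial : ℝ) := prod_A (2 * k - 1)
      _ = ((2 * k).factorial : ℝ) := by rw [show 2 * k - 1 + 1 = 2 * k from by omega]
  have hB : (∏ i ∈ Finset.range (2 * k - 1), ((n : ℝ) - (1 + i)))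
      = ((n - 1).descFactorial (2 * k - 1) : ℝ) := prod_B n (2 * k - 1) (by omega)
  rw [hA, hB]
  have hfd : (n - 1 - (2 * k - 1)).factorial * (n - 1).descFactorial (2 * k - 1)
      = (n - 1).factorial := Nat.factorial_mul_descFactorial (by omega)
  rw [show n - 1 - (2 * k - 1) = n - 2 * k from by omega] at hfd
  have h0 : ((n - 2 * k).factorial : ℝ) ≠ 0 := Nat.cast_ne_zero.mpr (Nat.factorial_ne_zero _)
  have := congrArg (fun t : ℕ => (t : ℝ)) hfd
  push_cast at this
  rw [eq_div_iff h0]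
  linear_combination (((2 * k).factorial : ℕ) : ℝ) * this

lemma fact3 (n : ℕ) (hn : 3 ≤ n) :
    ((n - 1).factorial : ℝ) = ((n : ℝ) - 1) * ((n : ℝ) - 2) * ((n - 3).factorial : ℝ) := by
  rw [show n - 1 = (n - 2) + 1 from by omega, Nat.factorial_succ,
    show n - 2 = (n - 3) + 1 from by omega, Nat.factorial_succ]
  have c1 : ((n - 3 : ℕ) : ℝ) = (n : ℝ) - 3 := by rw [Nat.cast_sub (by omega)]; norm_num
  push_cast [c1]
  ring

/-- for `n ≥ 3`, `k ≥ 1`, `2k ≤ n`, `μ ∈ ℝ` and `R = (μ/2)·g²` the algebraic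
curvature tensor of constant sectional curvature `μ`, the 2k-Ricci tensor
`ℛ^{(2k)} = c_g^{2k−1}(R^k)` satisfies `ℛ^{(2k)} = λ_k·g` with
`λ_k = (n−1)(n−2)·C_{n,k}·μ^k`, `C_{n,k} = (2k)!·(n−3)!/(2^k·(n−2k)!)`; equivalently
`c_g^{2k−1}(g^{2k}) = ((2k)!·(n−1)!/(n−2k)!)·g`. -/
theorem stmt_4 (n k : ℕ) (hn : 3 ≤ n) (hk : 1 ≤ k) (h2k : 2 * k ≤ n) (μ : ℝ) :
    (dfContr n)^[2 * k - 1] (dfPow n ((μ / 2) • dfPow n (dfG n) 2) k) =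
        ((((n : ℝ) - 1) * ((n : ℝ) - 2) *
            (((2 * k).factorial : ℝ) * ((n - 3).factorial : ℝ) /
              (2 ^ k * ((n - 2 * k).factorial : ℝ))) * μ ^ k)) • dfG n ∧
      (dfContr n)^[2 * k - 1] (dfPow n (dfG n) (2 * k)) =
        ((((2 * k).factorial : ℝ) * ((n - 1).factorial : ℝ) /
            ((n - 2 * k).factorial : ℝ))) • dfG n := by
  have hiter : (dfContr n)^[2 * k - 1] (gmdf n (2 * k)) =
      (∏ i ∈ Finset.range (2 * k - 1), (((1 : ℝ) + i + 1) * ((n : ℝ) - (1 + i)))) • gmdf n 1 := by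
    have h := dfContr_iterate_gmdf n 1 (2 * k - 1)
    rw [show 1 + (2 * k - 1) = 2 * k from by omega] at h
    push_cast at h
    exact h
  have hP := P_eq n k hk h2k
  have hpow2 : dfPow n (dfG n) 2 = gmdf n 2 := by
    rw [dfG_eq, dfPow_gmdf]
  constructor
  · rw [hpow2, dfPow_smul, dfPow_gmdf, dfContr_iterate_smul, hiter, smul_smul, hP, dfG_eq n]
    congr 1
    rw [fact3 n hn]
    have h0 : ((n - 2 * k).factorial : ℝ) ≠ 0 := Nat.cast_ne_zero.mpr (Nat.factorial_ne_zero _)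
    have h2 : (2 : ℝ) ^ k ≠ 0 := pow_ne_zero _ two_ne_zero
    field_simp
    have h3 : (1/2:ℝ)^k * 2^k = 1 := by rw [← mul_pow]; norm_num
    linear_combination (μ ^ k * (n:ℝ) ^ 2 - 3 * μ ^ k * n + 2 * μ ^ k) * h3
  · rw [dfG_eq, dfPow_gmdf, one_mul, hiter, hP, ← dfG_eq n]
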